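/- Let c be a cycle in the directed graph E and f : 𝒯_E* → ℒ(R) an order-reversing function. Then the saturation f̄ of f satisfies f̄( c̄⁰ , ∅ ) = f( c̄⁰ , ∅ ), where c̄⁰ is the hereditary saturated closure of the vertex set of c. -/

import Mathlib

/-- A directed graph: vertices, edges, and source/range maps. -/
structure DGraph where
  V : Type
  E : Type
  src : E → V
  rng : E → V

namespace DGraph

variable (G : DGraph)

/-- A subset of vertices is hereditary if ranges of edges emitted from it stay in it. -/
def Hereditary (H : Set G.V) : Prop := ∀ e : G.E, G.src e ∈ H → G.rng e ∈ H

/-- A vertex is regular if it emits a nonzero finite number of edges. -/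
def Regular (v : G.V) : Prop :=
  {e : G.E | G.src e = v}.Finite ∧ {e : G.E | G.src e = v}.Nonempty

/-- A vertex is singular if it is a sink or an infinite emitter. -/
def Singular (v : G.V) : Prop := ¬ Regular G v

/-- A vertex emitting infinitely many edges. -/
def InfEmitter (v : G.V) : Prop := {e : G.E | G.src e = v}.Infinite

/-- A subset is saturated if it contains every regular vertex all of whose
emitted edges have range in the subset. -/
def Saturated (H : Set G.V) : Prop :=
  ∀ v : G.V, Regular G v → (∀ e : G.E, G.src e = v → G.rng e ∈ H) → v ∈ H

/-- A breaking vertex for a hereditary set `H`. -/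
def Breaking (H : Set G.V) (v : G.V) : Prop :=
  InfEmitter G v ∧ v ∉ H ∧
    {e : G.E | G.src e = v ∧ G.rng e ∉ H}.Finite ∧
    {e : G.E | G.src e = v ∧ G.rng e ∉ H}.Nonempty

/-- `X` contains `H`, is hereditary saturated, and absorbs vertices of `S`
all of whose emitted edges have range in `X`. -/
def SClosed (H S X : Set G.V) : Prop :=
  H ⊆ X ∧ Hereditary G X ∧ Saturated G X ∧
    ∀ v ∈ S, (∀ e : G.E, G.src e = v → G.rng e ∈ X) → v ∈ X

/-- The `S`-saturation of `H`: the smallest `SClosed` set. -/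
def SSat (H S : Set G.V) : Set G.V := ⋂₀ {X | SClosed G H S X}

end DGraph

namespace DGraph

variable (G : DGraph)

/-- An admissible pair: a hereditary saturated set of vertices together with a
set of breaking vertices for it. -/
structure APair (G : DGraph) where
  H : Set G.V
  S : Set G.V
  hered : Hereditary G H
  sat : Saturated G H
  brk : ∀ v ∈ S, Breaking G H v

/-- The order on admissible pairs: `(H₁,S₁) ≤ (H₂,S₂)` iff `H₁ ⊆ H₂` and `S₁ ⊆ H₂ ∪ S₂`. -/
def APle (P Q : APair G) : Prop := P.H ⊆ Q.H ∧ P.S ⊆ Q.H ∪ Q.S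

end DGraph

namespace DGraph

/-- `Q` is the least upper bound of the family `P` of admissible pairs. -/
def IsSupFam {ι : Type} (G : DGraph) (P : ι → APair G) (Q : APair G) : Prop :=
  (∀ i, APle G (P i) Q) ∧ ∀ R : APair G, (∀ i, APle G (P i) R) → APle G Q R

end DGraph

namespace DGraph

/-- An admissible pair is nontrivial if it is not `(∅, ∅)`; nontrivial pairs form `𝒯_E*`. -/
def Nontriv (G : DGraph) (P : APair G) : Prop := ¬ (P.H = ∅ ∧ P.S = ∅)

/-- A saturated function `𝒯_E* → ℒ(R)`: it sends suprema of (nonempty) families of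
nontrivial admissible pairs to intersections of ideals. -/
def SatFun (G : DGraph) (R : Type) [CommRing R] (f : APair G → Ideal R) : Prop :=
  ∀ (ι : Type) [Nonempty ι] (P : ι → APair G) (Q : APair G),
    (∀ i, Nontriv G (P i)) → Nontriv G Q → IsSupFam G P Q →
      f Q = ⨅ i, f (P i)

end DGraph

namespace DGraph

variable (G : DGraph)

lemma sclosed_SSat (H S : Set G.V) : SClosed G H S (SSat G H S) := by
  refine ⟨?_, ?_, ?_, ?_⟩
  · exact fun v hv => Set.mem_sInter.mpr fun X hX => hX.1 hv
  · exact fun e he => Set.mem_sInter.mpr fun X hX => hX.2.1 e (Set.mem_sInter.mp he X hX)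
  · exact fun v hreg hall => Set.mem_sInter.mpr fun X hX =>
      hX.2.2.1 v hreg fun e hsrc => Set.mem_sInter.mp (hall e hsrc) X hX
  · exact fun v hvS hall => Set.mem_sInter.mpr fun X hX =>
      hX.2.2.2 v hvS fun e hsrc => Set.mem_sInter.mp (hall e hsrc) X hX

lemma SSat_subset {H S X : Set G.V} (hX : SClosed G H S X) : SSat G H S ⊆ X :=
  Set.sInter_subset_of_mem hX

lemma subset_SSat (H S : Set G.V) : H ⊆ SSat G H S := (sclosed_SSat G H S).1

lemma APle_refl (P : APair G) : APle G P P := ⟨subset_rfl, Set.subset_union_right⟩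

lemma APle_trans {P Q R' : APair G} (h1 : APle G P Q) (h2 : APle G Q R') : APle G P R' :=
  ⟨h1.1.trans h2.1, h1.2.trans (Set.union_subset (h2.1.trans Set.subset_union_left) h2.2)⟩

lemma reach_mem {H : Set G.V} (hH : Hereditary G H) {a b : G.V}
    (h : Relation.ReflTransGen (fun a b => ∃ e, G.src e = a ∧ G.rng e = b) a b)
    (ha : a ∈ H) : b ∈ H := by
  induction h with
  | refl => exact ha
  | tail _ he ih =>
    obtain ⟨e, h1, h2⟩ := he
    exact h2 ▸ hH e (h1.symm ▸ ih)

lemma nocycle (C H S : Set G.V)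
    (hC : ∀ v ∈ C, ∃ e, G.src e = v ∧ G.rng e ∈ C)
    (hH : Hereditary G H) (hdisj : ∀ v ∈ H, v ∉ C) :
    ∀ v ∈ SSat G H S, v ∉ C := by
  set r : G.V → G.V → Prop := fun a b => ∃ e, G.src e = a ∧ G.rng e = b with hr
  set W : Set G.V := {v | (∃ w ∈ C, Relation.ReflTransGen r v w) ∧ v ∉ H} with hW
  have noW : ∀ v : G.V, (∀ e, G.src e = v → G.rng e ∈ SSat G H S \ W) → v ∉ W := by
    rintro v hv ⟨⟨w, hwC, hreach⟩, hvH⟩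
    rcases Relation.ReflTransGen.cases_head hreach with heq | ⟨b, ⟨e, h1, h2⟩, hreach'⟩
    · subst heq
      obtain ⟨e, h1, h2⟩ := hC v hwC
      have h3 := (hv e h1).2
      have h4 : G.rng e ∈ H := by
        by_contra hcon
        exact h3 ⟨⟨G.rng e, h2, Relation.ReflTransGen.refl⟩, hcon⟩
      exact hdisj _ h4 h2
    · have h3 := hv e h1
      have hbW : b ∉ W := h2 ▸ h3.2
      have hbH : b ∈ H := by
        by_contra hcon
        exact hbW ⟨⟨w, hwC, hreach'⟩, hcon⟩
      exact hdisj w (reach_mem G hH hreach' hbH) hwC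
  have hX' : SClosed G H S (SSat G H S \ W) := by
    refine ⟨?_, ?_, ?_, ?_⟩
    · exact fun v hvH => ⟨subset_SSat G H S hvH, fun hvW => hvW.2 hvH⟩
    · intro e he
      refine ⟨(sclosed_SSat G H S).2.1 e he.1, ?_⟩
      rintro ⟨⟨w, hwC, hreach⟩, hrngH⟩
      have hsrc_reach : Relation.ReflTransGen r (G.src e) w :=
        Relation.ReflTransGen.head ⟨e, rfl, rfl⟩ hreach
      have hsrcH : G.src e ∈ H := by
        by_contra hcon
        exact he.2 ⟨⟨w, hwC, hsrc_reach⟩, hcon⟩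
      exact hrngH (hH e hsrcH)
    · intro v hreg hall
      exact ⟨(sclosed_SSat G H S).2.2.1 v hreg fun e hsrc => (hall e hsrc).1, noW v hall⟩
    · intro v hvS hall
      exact ⟨(sclosed_SSat G H S).2.2.2 v hvS fun e hsrc => (hall e hsrc).1, noW v hall⟩
  intro v hv hvC
  exact (SSat_subset G hX' hv).2 ⟨⟨v, hvC, Relation.ReflTransGen.refl⟩, fun hvH => hdisj v hvH hvC⟩

lemma hered_iUnion {ι : Type} (Hs : ι → Set G.V) (h : ∀ i, Hereditary G (Hs i)) :
    Hereditary G (⋃ i, Hs i) := by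
  intro e he
  obtain ⟨i, hi⟩ := Set.mem_iUnion.mp he
  exact Set.mem_iUnion.mpr ⟨i, h i e hi⟩

end DGraph

/-- if `c` is a cycle in `E` and `f` is order-reversing, then the
saturation `g` of `f` agrees with `f` at the admissible pair `(c̄⁰, ∅)`, where
`c̄⁰` is the hereditary saturated closure of the vertex set of `c`. -/
theorem saturation_at_cycle {R : Type} [CommRing R] (G : DGraph)
    (L : List G.E) (hL : L ≠ [])
    (hchain : L.Chain' (fun e f => G.rng e = G.src f))
    (hclosed : G.rng (L.getLast hL) = G.src (L.head hL))
    (hnodup : (L.map G.src).Nodup)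
    (f g : DGraph.APair G → Ideal R)
    (hf : ∀ P Q : DGraph.APair G, DGraph.Nontriv G P → DGraph.Nontriv G Q →
      DGraph.APle G P Q → f Q ≤ f P)
    (hg : DGraph.SatFun G R g)
    (hge : ∀ P, DGraph.Nontriv G P → f P ≤ g P)
    (hmin : ∀ h : DGraph.APair G → Ideal R, DGraph.SatFun G R h →
      (∀ P, DGraph.Nontriv G P → f P ≤ h P) →
      ∀ P, DGraph.Nontriv G P → g P ≤ h P)
    (Q : DGraph.APair G)
    (hQH : Q.H = DGraph.SSat G {v : G.V | v ∈ L.map G.src} ∅)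
    (hQS : Q.S = ∅) :
    g Q = f Q := by
  classical
  set C : Set G.V := {v : G.V | v ∈ L.map G.src} with hCdef
  set len := L.length with hlendef
  have hlen : 0 < len := List.length_pos_iff.mpr hL
  -- stepping around the cycle
  have hstep : ∀ (m : ℕ) (hm : m < len),
      G.rng (L.get ⟨m, hm⟩) = G.src (L.get ⟨(m + 1) % len, Nat.mod_lt _ hlen⟩) := by
    intro m hm
    by_cases h : m + 1 < len
    · have hmod : (m + 1) % len = m + 1 := Nat.mod_eq_of_lt h
      have := List.isChain_iff_getElem.mp hchain m (by omega)
      simp only [hmod]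
      exact this
    · have hm1 : m = len - 1 := by omega
      have h0 : (m + 1) % len = 0 := by
        have : m + 1 = len := by omega
        rw [this, Nat.mod_self]
      simp only [h0]
      have hgl : L.get ⟨m, hm⟩ = L.getLast hL := by
        subst hm1
        exact (List.getLast_eq_getElem hL).symm
      have hh : L.get ⟨0, hlen⟩ = L.head hL := List.get_mk_zero hlen
      rw [hgl, hh]
      exact hclosed
  have hCget : ∀ v, v ∈ C ↔ ∃ i : Fin len, G.src (L.get i) = v := by
    intro v
    constructor
    · intro hv
      obtain ⟨e, heL, hsrc⟩ := List.mem_map.mp hv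
      obtain ⟨n, hn⟩ := List.mem_iff_get.mp heL
      exact ⟨n, by rw [hn, hsrc]⟩
    · rintro ⟨i, hi⟩
      exact List.mem_map.mpr ⟨L.get i, List.get_mem _ _, hi⟩
  -- every cycle vertex emits an edge whose range is a cycle vertex
  have hCemit : ∀ v ∈ C, ∃ e, G.src e = v ∧ G.rng e ∈ C := by
    intro v hv
    obtain ⟨i, hi⟩ := (hCget v).mp hv
    refine ⟨L.get i, hi, ?_⟩
    have := hstep i.1 i.isLt
    rw [show L.get ⟨i.1, i.isLt⟩ = L.get i from rfl] at this
    rw [this]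
    exact (hCget _).mpr ⟨⟨(i.1 + 1) % len, Nat.mod_lt _ hlen⟩, rfl⟩
  -- a hereditary set containing one cycle vertex contains all of them
  have hCsub : ∀ (H : Set G.V), DGraph.Hereditary G H → (∃ v ∈ C, v ∈ H) → C ⊆ H := by
    rintro H hH ⟨v, hvC, hvH⟩ w hwC
    obtain ⟨i, hi⟩ := (hCget v).mp hvC
    obtain ⟨j, hj⟩ := (hCget w).mp hwC
    have key : ∀ n : ℕ, G.src (L.get ⟨(i.1 + n) % len, Nat.mod_lt _ hlen⟩) ∈ H := by
      intro n
      induction n with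
      | zero =>
        have h0 : (i.1 + 0) % len = i.1 := by
          rw [Nat.add_zero]; exact Nat.mod_eq_of_lt i.isLt
        simp only [h0]
        rw [show L.get ⟨i.1, i.isLt⟩ = L.get i from rfl, hi]
        exact hvH
      | succ n ih =>
        have h1 := hstep ((i.1 + n) % len) (Nat.mod_lt _ hlen)
        have h2 : ((i.1 + n) % len + 1) % len = (i.1 + (n + 1)) % len := by
          rw [Nat.mod_add_mod, Nat.add_assoc]
        have h3 : (⟨(↑i + (n + 1)) % len, Nat.mod_lt _ hlen⟩ : Fin len) =
            ⟨((↑i + n) % len + 1) % len, Nat.mod_lt _ hlen⟩ := Fin.ext h2.symm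
        rw [h3, ← h1]
        exact hH _ ih
    have hn := key (len - i.1 + j.1)
    have heq : (i.1 + (len - i.1 + j.1)) % len = j.1 := by
      rw [← Nat.add_assoc, Nat.add_sub_cancel' (le_of_lt i.isLt), Nat.add_mod_left]
      exact Nat.mod_eq_of_lt j.isLt
    simp only [heq] at hn
    rw [show L.get ⟨j.1, j.isLt⟩ = L.get j from rfl, hj] at hn
    exact hn
  -- Q is nontrivial
  have hv0C : G.src (L.head hL) ∈ C := List.mem_map.mpr ⟨L.head hL, List.head_mem hL, rfl⟩
  have hv0Q : G.src (L.head hL) ∈ Q.H := by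
    rw [hQH]
    exact DGraph.subset_SSat G C ∅ hv0C
  have hQnt : DGraph.Nontriv G Q := by
    rintro ⟨h1, _⟩
    rw [h1] at hv0Q
    exact hv0Q
  -- key fact: if Q ≤ sup of a family, some member of the family is ≥ Q
  have keyfact : ∀ {ι : Type} (P : ι → DGraph.APair G) (Q' : DGraph.APair G),
      DGraph.IsSupFam G P Q' → DGraph.APle G Q Q' → ∃ i, DGraph.APle G Q (P i) := by
    intro ι P Q' hsup hle
    by_contra hno
    push_neg at hno
    set HU : Set G.V := ⋃ i, (P i).H with hHU
    set SU : Set G.V := ⋃ i, (P i).S with hSU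
    have hHUher : DGraph.Hereditary G HU := DGraph.hered_iUnion G _ fun i => (P i).hered
    have hscl := DGraph.sclosed_SSat G HU SU
    have hbrk : ∀ v ∈ SU \ DGraph.SSat G HU SU, DGraph.Breaking G (DGraph.SSat G HU SU) v := by
      rintro v ⟨hvSU, hvnot⟩
      obtain ⟨i, hvi⟩ := Set.mem_iUnion.mp hvSU
      obtain ⟨hinf, _, hfin, _⟩ := (P i).brk v hvi
      refine ⟨hinf, hvnot, ?_, ?_⟩
      · refine hfin.subset ?_
        rintro e ⟨h1, h2⟩
        exact ⟨h1, fun hmem => h2 (hscl.1 (Set.mem_iUnion.mpr ⟨i, hmem⟩))⟩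
      · by_contra hemp
        rw [Set.not_nonempty_iff_eq_empty] at hemp
        apply hvnot
        apply hscl.2.2.2 v hvSU
        intro e hsrc
        by_contra hcon
        have : e ∈ {e | G.src e = v ∧ G.rng e ∉ DGraph.SSat G HU SU} := ⟨hsrc, hcon⟩
        rw [hemp] at this
        exact this
    set Rp : DGraph.APair G :=
      { H := DGraph.SSat G HU SU
        S := SU \ DGraph.SSat G HU SU
        hered := hscl.2.1
        sat := hscl.2.2.1
        brk := hbrk } with hRp
    have hub : ∀ i, DGraph.APle G (P i) Rp := by
      intro i
      refine ⟨fun v hv => hscl.1 (Set.mem_iUnion.mpr ⟨i, hv⟩), ?_⟩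
      intro v hv
      by_cases h : v ∈ DGraph.SSat G HU SU
      · exact Or.inl h
      · exact Or.inr ⟨Set.mem_iUnion.mpr ⟨i, hv⟩, h⟩
    have hQR : Q.H ⊆ DGraph.SSat G HU SU := hle.1.trans (hsup.2 Rp hub).1
    have hdisjHU : ∀ v ∈ HU, v ∉ C := by
      intro v hv hvC
      obtain ⟨i, hvi⟩ := Set.mem_iUnion.mp hv
      apply hno i
      refine ⟨?_, by rw [hQS]; exact Set.empty_subset _⟩
      rw [hQH]
      refine DGraph.SSat_subset G ⟨?_, (P i).hered, (P i).sat, fun v hv _ => absurd hv (Set.notMem_empty v)⟩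
      exact hCsub (P i).H (P i).hered ⟨v, hvC, hvi⟩
    exact DGraph.nocycle G C HU SU hCemit hHUher hdisjHU _ (hQR hv0Q) hv0C
  -- the modified function
  set h : DGraph.APair G → Ideal R :=
    fun P => if DGraph.APle G Q P then g P ⊓ f Q else g P with hdef
  have hhsat : DGraph.SatFun G R h := by
    intro ι _inst P' Q'' hPnt hQ''nt hsup
    have hgQ'' : g Q'' = ⨅ i, g (P' i) := hg ι P' Q'' hPnt hQ''nt hsup
    by_cases hle : DGraph.APle G Q Q''
    · obtain ⟨i₀, hi₀⟩ := keyfact P' Q'' hsup hle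
      have hval : h Q'' = g Q'' ⊓ f Q := by simp only [hdef]; rw [if_pos hle]
      rw [hval]
      apply le_antisymm
      · apply le_iInf
        intro i
        have hgle : g Q'' ≤ g (P' i) := hgQ'' ▸ iInf_le _ i
        by_cases hi : DGraph.APle G Q (P' i)
        · simp only [hdef]; rw [if_pos hi]
          exact inf_le_inf_right _ hgle
        · simp only [hdef]; rw [if_neg hi]
          exact inf_le_left.trans hgle
      · apply le_inf
        · rw [hgQ'']
          apply le_iInf
          intro i
          refine (iInf_le _ i).trans ?_
          by_cases hi : DGraph.APle G Q (P' i)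
          · simp only [hdef]; rw [if_pos hi]; exact inf_le_left
          · simp only [hdef]; rw [if_neg hi]
        · refine (iInf_le _ i₀).trans ?_
          simp only [hdef]; rw [if_pos hi₀]
          exact inf_le_right
    · have hni : ∀ i, ¬ DGraph.APle G Q (P' i) :=
        fun i hi => hle (DGraph.APle_trans G hi (hsup.1 i))
      have hval : h Q'' = g Q'' := by simp only [hdef]; rw [if_neg hle]
      rw [hval, hgQ'']
      refine iInf_congr fun i => ?_
      simp only [hdef]; rw [if_neg (hni i)]
  have hfh : ∀ P, DGraph.Nontriv G P → f P ≤ h P := by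
    intro P hP
    by_cases hi : DGraph.APle G Q P
    · simp only [hdef]; rw [if_pos hi]
      exact le_inf (hge P hP) (hf Q P hQnt hP hi)
    · simp only [hdef]; rw [if_neg hi]
      exact hge P hP
  have hgh := hmin h hhsat hfh Q hQnt
  refine le_antisymm (hgh.trans ?_) (hge Q hQnt)
  simp only [hdef]
  rw [if_pos (DGraph.APle_refl G Q)]
  exact inf_le_right
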